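/- Let A be a nonempty finite action set and let Δmax ≥ 0, α ≥ 0. There exists a constant C (one may take C = √2 · (2·Δmax + α) · √|A|) such that for every horizon T, every prediction sequence p^1, …, p^T with p^t ∈ [−α, α]^A, and every reward sequence x^1, …, x^T with all coordinates contained in some interval of length Δmax, the external regret of predictive regret matching satisfies max_{a∈A} R^T_a ≤ C · √T; hence the external regret grows sublinearly in T for every such reward sequence. -/

import Mathlib

open Finset

/-- Instantaneous regret vector: `r(σ, x)_a = x_a − ⟨σ, x⟩`. -/
noncomputable def instRegret {A : Type*} [Fintype A] (σ x : A → ℝ) : A → ℝ :=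
  fun a => x a - ∑ b, σ b * x b

/-- Strategy obtained by normalizing a nonnegative vector `ξ`; uniform if `ξ = 0`. -/
noncomputable def stratOf {A : Type*} [Fintype A] (ξ : A → ℝ) : A → ℝ :=
  if 0 < ∑ a, ξ a then fun a => ξ a / ∑ b, ξ b
  else fun _ => (Fintype.card A : ℝ)⁻¹

/-- PRM strategy from previous cumulative regret `R` and current prediction `pt`:
`σ = [R + p]⁺ / ‖[R + p]⁺‖₁` (uniform if the positive part vanishes). -/
noncomputable def prmSigmaAux {A : Type*} [Fintype A] (pt R : A → ℝ) : A → ℝ :=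
  stratOf (fun a => max (R a + pt a) 0)

/-- PRM cumulative regret: `R^0 = 0`, `R^t = R^{t−1} + r(σ^t, x^t)`. -/
noncomputable def prmR {A : Type*} [Fintype A] (p x : ℕ → A → ℝ) : ℕ → A → ℝ
  | 0 => fun _ => 0
  | t + 1 => fun a =>
      prmR p x t a + instRegret (prmSigmaAux (p (t + 1)) (prmR p x t)) (x (t + 1)) a

/-- PRM strategy at step `t ≥ 1`. -/
noncomputable def prmSigma {A : Type*} [Fintype A] (p x : ℕ → A → ℝ) (t : ℕ) : A → ℝ :=
  prmSigmaAux (p t) (prmR p x (t - 1))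

section Aux
variable {A : Type*} [Fintype A] [Nonempty A]

lemma stratOf_nonneg (ξ : A → ℝ) (hξ : ∀ a, 0 ≤ ξ a) (a : A) : 0 ≤ stratOf ξ a := by
  unfold stratOf
  split_ifs with h
  · exact div_nonneg (hξ a) h.le
  · positivity

lemma stratOf_sum (ξ : A → ℝ) : ∑ a, stratOf ξ a = 1 := by
  unfold stratOf
  split_ifs with h
  · rw [← Finset.sum_div]
    exact div_self (ne_of_gt h)
  · rw [Finset.sum_const, Finset.card_univ, nsmul_eq_mul]
    have hc : (Fintype.card A : ℝ) ≠ 0 := Nat.cast_ne_zero.mpr Fintype.card_pos.ne'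
    field_simp

lemma sum_mul_instRegret (σ x : A → ℝ) (h : ∑ a, σ a = 1) :
    ∑ a, σ a * instRegret σ x a = 0 := by
  unfold instRegret
  rw [Finset.sum_congr rfl (fun a _ => mul_sub (σ a) (x a) _), Finset.sum_sub_distrib,
    ← Finset.sum_mul, h, one_mul, sub_self]

lemma sum_xi_mul_instRegret (ξ x : A → ℝ) (hξ : ∀ a, 0 ≤ ξ a) :
    ∑ a, ξ a * instRegret (stratOf ξ) x a = 0 := by
  by_cases h : 0 < ∑ a, ξ a
  · have hσ : ∀ a, ξ a = (∑ b, ξ b) * stratOf ξ a := by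
      intro a
      unfold stratOf
      rw [if_pos h]
      field_simp
    calc ∑ a, ξ a * instRegret (stratOf ξ) x a
        = (∑ b, ξ b) * ∑ a, stratOf ξ a * instRegret (stratOf ξ) x a := by
          rw [Finset.mul_sum]
          exact Finset.sum_congr rfl (fun a _ => by rw [hσ a]; ring)
      _ = 0 := by rw [sum_mul_instRegret _ _ (stratOf_sum ξ), mul_zero]
  · have hz : ∀ a ∈ Finset.univ, ξ a = 0 := by
      rw [← Finset.sum_eq_zero_iff_of_nonneg (fun a _ => hξ a)]
      exact le_antisymm (not_lt.mp h) (Finset.sum_nonneg (fun a _ => hξ a))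
    exact Finset.sum_eq_zero (fun a ha => by rw [hz a ha, zero_mul])

lemma abs_instRegret_le (σ x : A → ℝ) (hσ0 : ∀ a, 0 ≤ σ a) (hσ1 : ∑ a, σ a = 1)
    (c Δ : ℝ) (hx : ∀ a, x a ∈ Set.Icc c (c + Δ)) (a : A) :
    |instRegret σ x a| ≤ Δ := by
  have hlo : c ≤ ∑ b, σ b * x b := by
    calc c = ∑ b, σ b * c := by rw [← Finset.sum_mul, hσ1, one_mul]
    _ ≤ ∑ b, σ b * x b :=
      Finset.sum_le_sum (fun b _ => mul_le_mul_of_nonneg_left (hx b).1 (hσ0 b))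
  have hhi : ∑ b, σ b * x b ≤ c + Δ := by
    calc ∑ b, σ b * x b ≤ ∑ b, σ b * (c + Δ) :=
        Finset.sum_le_sum (fun b _ => mul_le_mul_of_nonneg_left (hx b).2 (hσ0 b))
    _ = c + Δ := by rw [← Finset.sum_mul, hσ1, one_mul]
  have h1 := (hx a).1
  have h2 := (hx a).2
  rw [abs_le]
  unfold instRegret
  constructor <;> nlinarith

lemma posSq_add_le (u v : ℝ) :
    (max (u + v) 0) ^ 2 ≤ (max u 0) ^ 2 + 2 * (max u 0) * v + v ^ 2 := by
  have key : (max u 0 + v) ^ 2 = (max u 0) ^ 2 + 2 * (max u 0) * v + v ^ 2 := by ring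
  rw [← key]
  rcases le_or_gt (u + v) 0 with h1 | h1
  · rw [max_eq_right h1]
    simpa using sq_nonneg (max u 0 + v)
  · rw [max_eq_left h1.le]
    have h2 : u + v ≤ max u 0 + v := add_le_add_left (le_max_left u 0) v
    exact pow_le_pow_left₀ h1.le h2 2

end Aux

section Main
variable {A : Type*} [Fintype A] [Nonempty A]

/-- One-step potential increase bound. -/
lemma phi_step (Δ α : ℝ) (hΔ : 0 ≤ Δ) (hα : 0 ≤ α)
    (R pt xt : A → ℝ) (hp : ∀ a, |pt a| ≤ α)
    (c : ℝ) (hx : ∀ a, xt a ∈ Set.Icc c (c + Δ)) :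
    ∑ a, (max (R a + instRegret (prmSigmaAux pt R) xt a) 0) ^ 2 ≤
      (∑ a, (max (R a) 0) ^ 2) +
        (Fintype.card A : ℝ) * (2 * α * Δ + Δ ^ 2) := by
  set ξ : A → ℝ := fun a => max (R a + pt a) 0 with hξdef
  have hξ0 : ∀ a, 0 ≤ ξ a := fun a => le_max_right _ _
  set σ : A → ℝ := prmSigmaAux pt R with hσdef
  set r : A → ℝ := instRegret σ xt with hrdef
  have hσ0 : ∀ a, 0 ≤ σ a := stratOf_nonneg ξ hξ0
  have hσ1 : ∑ a, σ a = 1 := stratOf_sum ξ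
  have hrb : ∀ a, |r a| ≤ Δ := abs_instRegret_le σ xt hσ0 hσ1 c Δ hx
  have hξr : ∑ a, ξ a * r a = 0 := sum_xi_mul_instRegret ξ xt hξ0
  have step1 : ∑ a, (max (R a + r a) 0) ^ 2 ≤
      ∑ a, ((max (R a) 0) ^ 2 + 2 * (max (R a) 0) * r a + (r a) ^ 2) :=
    Finset.sum_le_sum (fun a _ => posSq_add_le (R a) (r a))
  have key : ∀ a, (max (R a) 0) * r a ≤ ξ a * r a + α * Δ := by
    intro a
    have h1 : |max (R a) 0 - ξ a| ≤ |pt a| := by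
      have := abs_max_sub_max_le_abs (R a) (R a + pt a) 0
      simpa [hξdef, abs_sub_comm] using this
    have h2 : |(max (R a) 0 - ξ a) * r a| ≤ α * Δ := by
      rw [abs_mul]
      exact mul_le_mul (le_trans h1 (hp a)) (hrb a) (abs_nonneg _) hα
    nlinarith [le_abs_self ((max (R a) 0 - ξ a) * r a)]
  have step2 : ∑ a, 2 * (max (R a) 0) * r a ≤ 2 * (Fintype.card A : ℝ) * (α * Δ) := by
    calc ∑ a, 2 * (max (R a) 0) * r a
        ≤ ∑ a, 2 * (ξ a * r a + α * Δ) := by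
          apply Finset.sum_le_sum
          intro a _
          have := key a
          nlinarith
      _ = 2 * ((∑ a, ξ a * r a) + (Fintype.card A : ℝ) * (α * Δ)) := by
          rw [← Finset.mul_sum, Finset.sum_add_distrib, Finset.sum_const,
            Finset.card_univ, nsmul_eq_mul]
      _ = 2 * (Fintype.card A : ℝ) * (α * Δ) := by rw [hξr]; ring
  have step3 : ∑ a, (r a) ^ 2 ≤ (Fintype.card A : ℝ) * Δ ^ 2 := by
    calc ∑ a, (r a) ^ 2 ≤ ∑ _a : A, Δ ^ 2 := by
          apply Finset.sum_le_sum
          intro a _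
          have := hrb a
          nlinarith [abs_nonneg (r a), sq_abs (r a)]
      _ = (Fintype.card A : ℝ) * Δ ^ 2 := by
          rw [Finset.sum_const, Finset.card_univ, nsmul_eq_mul]
  calc ∑ a, (max (R a + r a) 0) ^ 2
      ≤ (∑ a, (max (R a) 0) ^ 2) + (∑ a, 2 * (max (R a) 0) * r a) + ∑ a, (r a) ^ 2 := by
        rw [← Finset.sum_add_distrib, ← Finset.sum_add_distrib]
        exact step1
    _ ≤ (∑ a, (max (R a) 0) ^ 2) + (Fintype.card A : ℝ) * (2 * α * Δ + Δ ^ 2) := by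
        nlinarith

lemma phi_bound (Δ α : ℝ) (hΔ : 0 ≤ Δ) (hα : 0 ≤ α)
    (T : ℕ) (p x : ℕ → A → ℝ)
    (hp : ∀ t, 1 ≤ t → t ≤ T → ∀ a, |p t a| ≤ α)
    (c : ℝ) (hx : ∀ t, 1 ≤ t → t ≤ T → ∀ a, x t a ∈ Set.Icc c (c + Δ)) :
    ∀ t, t ≤ T → ∑ a, (max (prmR p x t a) 0) ^ 2 ≤
      (t : ℝ) * ((Fintype.card A : ℝ) * (2 * α * Δ + Δ ^ 2)) := by
  intro t
  induction t with
  | zero => intro _; simp [prmR]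
  | succ n ih =>
    intro hn
    have hn' : n ≤ T := Nat.le_of_succ_le hn
    have h1 : ∑ a, (max (prmR p x (n+1) a) 0) ^ 2 ≤
        (∑ a, (max (prmR p x n a) 0) ^ 2) +
          (Fintype.card A : ℝ) * (2 * α * Δ + Δ ^ 2) := by
      have := phi_step Δ α hΔ hα (prmR p x n) (p (n+1)) (x (n+1))
        (hp (n+1) (Nat.le_add_left 1 n) hn) c
        (hx (n+1) (Nat.le_add_left 1 n) hn)
      simpa [prmR] using this
    have h2 := ih hn'
    push_cast
    nlinarith [Finset.sum_nonneg (fun a (_ : a ∈ Finset.univ) => sq_nonneg (max (prmR p x n a) 0)),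
      mul_nonneg (mul_nonneg hα hΔ) (Nat.cast_nonneg (Fintype.card A) : (0:ℝ) ≤ _)]

end Main

/-- There is a constant `C` (e.g. `C = √2·(2Δmax+α)·√|A|`) such that for every
horizon `T`, every prediction sequence bounded in `[−α,α]^A`, and every reward
sequence with coordinates in some interval of length `Δmax`, the external regret
of PRM is at most `C·√T`; hence it grows sublinearly in `T`. -/
theorem prm_regret_minimizer
    {A : Type*} [Fintype A] [Nonempty A]
    (Δmax α : ℝ) (hΔ : 0 ≤ Δmax) (hα : 0 ≤ α) :
    ∃ C : ℝ, C = Real.sqrt 2 * (2 * Δmax + α) * Real.sqrt (Fintype.card A) ∧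
      ∀ (T : ℕ) (p x : ℕ → A → ℝ),
        (∀ t, 1 ≤ t → t ≤ T → ∀ a, |p t a| ≤ α) →
        (∃ c : ℝ, ∀ t, 1 ≤ t → t ≤ T → ∀ a, x t a ∈ Set.Icc c (c + Δmax)) →
        Finset.univ.sup' Finset.univ_nonempty (fun a => prmR p x T a) ≤
          C * Real.sqrt T := by
  set C : ℝ := Real.sqrt 2 * (2 * Δmax + α) * Real.sqrt (Fintype.card A) with hC
  refine ⟨C, rfl, ?_⟩
  intro T p x hp ⟨c, hx⟩
  have hC0 : 0 ≤ C := by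
    apply mul_nonneg (mul_nonneg (Real.sqrt_nonneg _) (by linarith)) (Real.sqrt_nonneg _)
  have hCsq : C ^ 2 = 2 * (2 * Δmax + α) ^ 2 * (Fintype.card A : ℝ) := by
    rw [hC, mul_pow, mul_pow, Real.sq_sqrt (by norm_num : (0:ℝ) ≤ 2),
      Real.sq_sqrt (Nat.cast_nonneg _)]
  have hΦ := phi_bound Δmax α hΔ hα T p x hp c hx T le_rfl
  have hB : (Fintype.card A : ℝ) * (2 * α * Δmax + Δmax ^ 2) ≤ C ^ 2 := by
    rw [hCsq]
    have hcard : (0:ℝ) ≤ (Fintype.card A : ℝ) := Nat.cast_nonneg _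
    have h : 2 * α * Δmax + Δmax ^ 2 ≤ 2 * (2 * Δmax + α) ^ 2 := by nlinarith
    nlinarith [mul_le_mul_of_nonneg_left h hcard]
  have hTB : (T : ℝ) * ((Fintype.card A : ℝ) * (2 * α * Δmax + Δmax ^ 2)) ≤ C ^ 2 * T := by
    have : (0:ℝ) ≤ (T:ℝ) := Nat.cast_nonneg _
    nlinarith
  have hrhs : C * Real.sqrt T = Real.sqrt (C ^ 2 * T) := by
    rw [Real.sqrt_mul (sq_nonneg C), Real.sqrt_sq hC0]
  apply Finset.sup'_le
  intro a _
  have h1 : prmR p x T a ≤ max (prmR p x T a) 0 := le_max_left _ _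
  have h2 : (max (prmR p x T a) 0) ^ 2 ≤ C ^ 2 * T := by
    refine le_trans ?_ (le_trans hΦ hTB)
    exact Finset.single_le_sum (fun b _ => sq_nonneg (max (prmR p x T b) 0))
      (Finset.mem_univ a)
  have h3 : max (prmR p x T a) 0 ≤ Real.sqrt (C ^ 2 * T) := by
    rw [← Real.sqrt_sq (le_max_right (prmR p x T a) 0)]
    exact Real.sqrt_le_sqrt h2
  rw [hrhs]
  exact le_trans h1 h3
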